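/- The algebra A^d_{p,p} is spanned by the sandwiched projectors Q^(k): A^d_{p,p} = span_ℂ{ (V_σ V'_τ) Q^(k) (V_π V'_ρ) : 0 ≤ k ≤ p and σ, τ, π, ρ ∈ S_p }. -/

import Mathlib

open Matrix Kronecker

namespace WBA

/-- Configurations of `p` qudits of local dimension `d`. -/
abbrev Conf (d p : ℕ) := Fin p → Fin d

/-- Operators on `H = (ℂ^d)^{⊗ 2p}`, indexed by pairs (unprimed configuration, primed
configuration). -/
abbrev Op (d p : ℕ) := Matrix (Conf d p × Conf d p) (Conf d p × Conf d p) ℂ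

/-- The projector `P⁺_{a,c'}` onto the maximally entangled state between unprimed system `a`
and primed system `c`, tensored with the identity elsewhere. -/
noncomputable def Pplus (d p : ℕ) (a c : Fin p) : Op d p :=
  Matrix.of fun xy uv =>
    if xy.1 a = xy.2 c ∧ uv.1 a = uv.2 c ∧ (∀ j, j ≠ a → xy.1 j = uv.1 j) ∧
        (∀ j, j ≠ c → xy.2 j = uv.2 j) then
      (d : ℂ)⁻¹
    else 0

/-- `d • P⁺_{a,c'}`, i.e. the partially transposed swap `V^{t_{c'}}_{(a,c')}`. -/
noncomputable def arc (d p : ℕ) (a c : Fin p) : Op d p := (d : ℂ) • Pplus d p a c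

/-- `V^(k) = ∏_{j=p-k+1}^{p} (d • P⁺_{j,j'})` (product over the last `k` systems;
`V^(0) = 1`). -/
noncomputable def Vop (d p k : ℕ) : Op d p :=
  (((List.range p).filter (fun j => decide (p - k ≤ j))).map
    (fun j => if h : j < p then arc d p ⟨j, h⟩ ⟨j, h⟩ else 1)).prod

/-- `Q^(p) = d^{-p} V^(p)` and `Q^(k) = d^{-k} V^(k) - d^{-(k+1)} V^(k+1)` for `k < p`. -/
noncomputable def Qop (d p k : ℕ) : Op d p :=
  if k = p then ((d : ℂ) ^ p)⁻¹ • Vop d p p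
  else ((d : ℂ) ^ k)⁻¹ • Vop d p k - ((d : ℂ) ^ (k + 1))⁻¹ • Vop d p (k + 1)

/-- Permutation matrix on `(ℂ^d)^{⊗ n}`: sends `e_v` to `e_{v ∘ σ⁻¹}`. -/
noncomputable def permMat (d n : ℕ) (σ : Equiv.Perm (Fin n)) :
    Matrix (Fin n → Fin d) (Fin n → Fin d) ℂ :=
  Matrix.of fun x u => if x = u ∘ ⇑σ⁻¹ then 1 else 0

/-- `V_σ`: permutation of the unprimed factors, identity on the primed factors. -/
noncomputable def VL (d p : ℕ) (σ : Equiv.Perm (Fin p)) : Op d p :=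
  (permMat d p σ) ⊗ₖ (1 : Matrix (Conf d p) (Conf d p) ℂ)

/-- `V'_τ`: permutation of the primed factors, identity on the unprimed factors. -/
noncomputable def VR (d p : ℕ) (τ : Equiv.Perm (Fin p)) : Op d p :=
  (1 : Matrix (Conf d p) (Conf d p) ℂ) ⊗ₖ (permMat d p τ)

/-- Identification of `H` with `(ℂ^d)^{⊗ (p+p)}`. -/
def glue (d p : ℕ) : (Conf d p × Conf d p) ≃ (Fin (p + p) → Fin d) :=
  (Equiv.sumArrowEquivProdArrow (Fin p) (Fin p) (Fin d)).symm.trans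
    (Equiv.arrowCongr finSumFinEquiv (Equiv.refl (Fin d)))

/-- The permutation operator `W_π`, `π ∈ S_{2p}`, permuting all `2p` tensor factors of `H`. -/
noncomputable def Wfull (d p : ℕ) (π : Equiv.Perm (Fin (p + p))) : Op d p :=
  (permMat d (p + p) π).submatrix (glue d p) (glue d p)

/-- Partial transpose over the `p` primed factors:
`⟨x,y|M^Γ|u,v⟩ = ⟨x,v|M|u,y⟩`. -/
noncomputable def ptrans (d p : ℕ) (M : Op d p) : Op d p :=
  Matrix.of fun xy uv => M (xy.1, uv.2) (uv.1, xy.2)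

/-- The algebra `A^d_{p,p}` of partially transposed permutation operators, as a
linear subspace of `End(H)`. -/
noncomputable def Apt (d p : ℕ) : Submodule ℂ (Op d p) :=
  Submodule.span ℂ {M | ∃ π : Equiv.Perm (Fin (p + p)), M = ptrans d p (Wfull d p π)}

/-- Extension of an operator on systems `1,…,p-r,1',…,(p-r)'` by the identity on the
remaining systems. -/
noncomputable def embed (d p r : ℕ) (M : Op d (p - r)) : Op d p :=
  Matrix.of fun xy uv =>
    M (xy.1 ∘ Fin.castLE (Nat.sub_le p r), xy.2 ∘ Fin.castLE (Nat.sub_le p r))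
      (uv.1 ∘ Fin.castLE (Nat.sub_le p r), uv.2 ∘ Fin.castLE (Nat.sub_le p r)) *
    (if ∀ j : Fin p, p - r ≤ (j : ℕ) → xy.1 j = uv.1 j ∧ xy.2 j = uv.2 j then 1 else 0)

/-- The ideal `M̃^(k) = span{ V_σ V'_τ Q^(k) V_π V'_ρ }` of `A^d_{p,p}`. -/
noncomputable def Mtil (d p k : ℕ) : Submodule ℂ (Op d p) :=
  Submodule.span ℂ {M | ∃ σ τ π ρ : Equiv.Perm (Fin p),
    M = VL d p σ * VR d p τ * Qop d p k * (VL d p π * VR d p ρ)}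

/-- Labels for the two irreps of `S_2`: symmetric `S` and antisymmetric `A`. -/
inductive SA
  | S
  | A
deriving DecidableEq

instance instFintypeSA : Fintype SA :=
  ⟨{SA.S, SA.A}, fun x => by cases x <;> simp⟩

/-- The swap operator on `ℂ^d ⊗ ℂ^d`. -/
noncomputable def Fsw (d : ℕ) : Matrix (Conf d 2) (Conf d 2) ℂ :=
  Matrix.of fun x u => if x 0 = u 1 ∧ x 1 = u 0 then 1 else 0

/-- Symmetric and antisymmetric projectors on `ℂ^d ⊗ ℂ^d`. -/
noncomputable def Esm (d : ℕ) : SA → Matrix (Conf d 2) (Conf d 2) ℂ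
  | SA.S => (2 : ℂ)⁻¹ • (1 + Fsw d)
  | SA.A => (2 : ℂ)⁻¹ • (1 - Fsw d)

/-- `E_i ⊗ E_j` on `H = (ℂ^d)^{⊗4}`. -/
noncomputable def EE (d : ℕ) (i j : SA) : Op d 2 := (Esm d i) ⊗ₖ (Esm d j)

/-- `E_i ⊗ 1` on `H = (ℂ^d)^{⊗4}`. -/
noncomputable def EId (d : ℕ) (i : SA) : Op d 2 :=
  (Esm d i) ⊗ₖ (1 : Matrix (Conf d 2) (Conf d 2) ℂ)

/-- Multiplicities `m_S = d(d+1)/2`, `m_A = d(d-1)/2` (real valued). -/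
noncomputable def mR (d : ℕ) : SA → ℝ
  | SA.S => (d : ℝ) * ((d : ℝ) + 1) / 2
  | SA.A => (d : ℝ) * ((d : ℝ) - 1) / 2

/-- Multiplicities `m_S = d(d+1)/2`, `m_A = d(d-1)/2` (complex valued). -/
noncomputable def mC (d : ℕ) : SA → ℂ
  | SA.S => (d : ℂ) * ((d : ℂ) + 1) / 2
  | SA.A => (d : ℂ) * ((d : ℂ) - 1) / 2

/-- `V^(1) = d • P⁺_{2,2'}` for `p = 2`. -/
noncomputable def V1 (d : ℕ) : Op d 2 := arc d 2 1 1

/-- `V^(2) = d² • P⁺_{2,2'} P⁺_{1,1'}` for `p = 2`. -/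
noncomputable def V2 (d : ℕ) : Op d 2 := arc d 2 1 1 * arc d 2 0 0

/-- `Q^(2) = d^{-2} V^(2)` for `p = 2`. -/
noncomputable def Q2 (d : ℕ) : Op d 2 := ((d : ℂ) ^ 2)⁻¹ • V2 d

/-- `Q^(1) = d^{-1} V^(1) - d^{-2} V^(2)` for `p = 2`. -/
noncomputable def Q1 (d : ℕ) : Op d 2 :=
  (d : ℂ)⁻¹ • V1 d - ((d : ℂ) ^ 2)⁻¹ • V2 d

/-- `G^(2)_{kl} = (d²/√(m_k m_l)) (E_k ⊗ 1) Q^(2) (E_l ⊗ 1)`. -/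
noncomputable def G2 (d : ℕ) (k l : SA) : Op d 2 :=
  ((d : ℂ) ^ 2 / ((Real.sqrt (mR d k * mR d l) : ℝ) : ℂ)) • (EId d k * Q2 d * EId d l)

/-- `G^(2) = G^(2)_{SS} + G^(2)_{AA}`. -/
noncomputable def G2sum (d : ℕ) : Op d 2 := G2 d SA.S SA.S + G2 d SA.A SA.A

/-- The Gram coefficients `b_{SS} = (d+2)/(4d)`, `b_{SA} = b_{AS} = 1/4`,
`b_{AA} = (d-2)/(4d)`. -/
noncomputable def bc (d : ℕ) : SA → SA → ℂ
  | SA.S, SA.S => ((d : ℂ) + 2) / (4 * (d : ℂ))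
  | SA.S, SA.A => 1 / 4
  | SA.A, SA.S => 1 / 4
  | SA.A, SA.A => ((d : ℂ) - 2) / (4 * (d : ℂ))

/-- `Ĝ^(1)_{[ij][kl]} = (E_i ⊗ E_j) Q^(1) (E_k ⊗ E_l)`. -/
noncomputable def Ghat1 (d : ℕ) (i j k l : SA) : Op d 2 :=
  EE d i j * Q1 d * EE d k l

/-- `G^(1)_{[ij][kl]} = b_{ij}⁻¹ Ĝ^(1)_{[ij][kl]}`. -/
noncomputable def G1 (d : ℕ) (i j k l : SA) : Op d 2 := (bc d i j)⁻¹ • Ghat1 d i j k l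

/-- `G^(1) = Σ_{ij} G^(1)_{[ij][ij]}`. -/
noncomputable def G1sum (d : ℕ) : Op d 2 := ∑ i : SA, ∑ j : SA, G1 d i j i j

/-- `G^(0)_{ij} = E_i⊗E_j - b_{ij}⁻¹ (E_i⊗E_j)Q^(1)(E_i⊗E_j)
- δ_{ij} (d²/m_i) (E_i⊗1)Q^(2)(E_i⊗1)`. -/
noncomputable def G0 (d : ℕ) (i j : SA) : Op d 2 :=
  EE d i j - (bc d i j)⁻¹ • (EE d i j * Q1 d * EE d i j) -
    (if i = j then (d : ℂ) ^ 2 / mC d i else 0) • (EId d i * Q2 d * EId d i)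

section AuxWBA

open Equiv Sum

variable {d p : ℕ}

/-- Indicator matrix for the "last `k` systems contracted" pattern. -/
noncomputable def Xmat (d p k : ℕ) : Op d p :=
  Matrix.of fun xy uv =>
    if (∀ j : Fin p, (p - k ≤ (j : ℕ) → xy.1 j = xy.2 j ∧ uv.1 j = uv.2 j) ∧
        ((j : ℕ) < p - k → xy.1 j = uv.1 j ∧ xy.2 j = uv.2 j)) then (1 : ℂ) else 0

/-- Permutation operator indexed by a permutation of `Fin p ⊕ Fin p`. -/
noncomputable def Wsum (d p : ℕ) (ρ : Equiv.Perm (Fin p ⊕ Fin p)) : Op d p :=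
  Matrix.of fun xy uv =>
    if (∀ s, Sum.elim xy.1 xy.2 (ρ s) = Sum.elim uv.1 uv.2 s) then (1 : ℂ) else 0

/-- The canonical double-coset representative: crossing on the last `k` systems. -/
def cross (p k : ℕ) : Equiv.Perm (Fin p ⊕ Fin p) where
  toFun s := match s with
    | .inl j => if p - k ≤ (j : ℕ) then .inr j else .inl j
    | .inr j => if p - k ≤ (j : ℕ) then .inl j else .inr j
  invFun s := match s with
    | .inl j => if p - k ≤ (j : ℕ) then .inr j else .inl j
    | .inr j => if p - k ≤ (j : ℕ) then .inl j else .inr j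
  left_inv := by rintro (j | j) <;> dsimp only <;> split_ifs with h <;> simp [h]
  right_inv := by rintro (j | j) <;> dsimp only <;> split_ifs with h <;> simp [h]

lemma ite_mul_ite (P Q : Prop) [Decidable P] [Decidable Q] :
    (if P then (1 : ℂ) else 0) * (if Q then 1 else 0) = if P ∧ Q then 1 else 0 := by
  by_cases hP : P <;> by_cases hQ : Q <;> simp [hP, hQ]

lemma point_mul_gen {I : Type*} [Fintype I] [DecidableEq I] {P M : Matrix I I ℂ} {g : I → I}
    (hP : ∀ i j, P i j = if g i = j then 1 else 0) :
    P * M = Matrix.of fun i j => M (g i) j := by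
  ext i j
  rw [Matrix.mul_apply]
  simp only [hP, ite_mul, one_mul, zero_mul, Matrix.of_apply]
  rw [Finset.sum_ite_eq]
  simp

lemma mul_point_gen {I : Type*} [Fintype I] [DecidableEq I] {P M : Matrix I I ℂ} {g : I → I}
    (hP : ∀ i j, P i j = if i = g j then 1 else 0) :
    M * P = Matrix.of fun i j => M i (g j) := by
  ext i j
  rw [Matrix.mul_apply]
  simp only [hP, mul_ite, mul_one, mul_zero, Matrix.of_apply]
  rw [Finset.sum_ite_eq']
  simp

lemma comp_inv_eq_iff (σ : Equiv.Perm (Fin p)) (x a : Conf d p) :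
    x = a ∘ ⇑σ⁻¹ ↔ x ∘ ⇑σ = a := by
  constructor
  · rintro rfl; funext j; simp
  · rintro rfl; funext j; simp

lemma VLVR_apply (α β : Equiv.Perm (Fin p)) (i j : Conf d p × Conf d p) :
    (VL d p α * VR d p β) i j =
      if i = (j.1 ∘ ⇑α⁻¹, j.2 ∘ ⇑β⁻¹) then 1 else 0 := by
  rcases i with ⟨x, y⟩; rcases j with ⟨u, v⟩
  have hk : VL d p α * VR d p β = Matrix.kroneckerMap (· * ·) (permMat d p α) (permMat d p β) := by
    rw [VL, VR, ← Matrix.mul_kronecker_mul, Matrix.mul_one, Matrix.one_mul]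
  rw [hk]
  simp only [Matrix.kroneckerMap_apply, permMat, Matrix.of_apply]
  rw [ite_mul_ite]
  refine if_congr ?_ rfl rfl
  constructor
  · rintro ⟨h1, h2⟩; exact Prod.ext h1 h2
  · intro h; exact ⟨congrArg Prod.fst h, congrArg Prod.snd h⟩

lemma VLVR_apply' (σ τ : Equiv.Perm (Fin p)) (i j : Conf d p × Conf d p) :
    (VL d p σ * VR d p τ) i j =
      if (i.1 ∘ ⇑σ, i.2 ∘ ⇑τ) = j then 1 else 0 := by
  rw [VLVR_apply]
  refine if_congr ?_ rfl rfl
  rcases i with ⟨x, y⟩; rcases j with ⟨u, v⟩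
  rw [Prod.mk.injEq, Prod.mk.injEq, comp_inv_eq_iff, comp_inv_eq_iff]

lemma sandwich_apply (σ τ α β : Equiv.Perm (Fin p)) (M : Op d p) :
    VL d p σ * VR d p τ * M * (VL d p α * VR d p β) =
      Matrix.of fun i j => M (i.1 ∘ ⇑σ, i.2 ∘ ⇑τ) (j.1 ∘ ⇑α⁻¹, j.2 ∘ ⇑β⁻¹) := by
  rw [point_mul_gen (g := fun i => (i.1 ∘ ⇑σ, i.2 ∘ ⇑τ)) (VLVR_apply' σ τ),
    mul_point_gen (g := fun j => (j.1 ∘ ⇑α⁻¹, j.2 ∘ ⇑β⁻¹)) (VLVR_apply α β)]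
  rfl

lemma ptrans_Wsum_apply (ρ : Equiv.Perm (Fin p ⊕ Fin p)) (x y u v : Conf d p) :
    ptrans d p (Wsum d p ρ) (x, y) (u, v) =
      if (∀ s, Sum.elim x v (ρ s) = Sum.elim u y s) then (1 : ℂ) else 0 := rfl

/-- Conjugating a partially transposed permutation operator by `V_σ V'_τ`s gives
another partially transposed permutation operator. -/
lemma elim_comp_map {γ : Type*} (x v : Fin p → γ) (f g : Fin p → Fin p) (z : Fin p ⊕ Fin p) :
    Sum.elim (x ∘ f) (v ∘ g) z = Sum.elim x v (Sum.map f g z) := by cases z <;> rfl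

lemma conj_lemma (σ τ α β : Equiv.Perm (Fin p)) (ρ : Equiv.Perm (Fin p ⊕ Fin p)) :
    VL d p σ * VR d p τ * ptrans d p (Wsum d p ρ) * (VL d p α * VR d p β) =
      ptrans d p (Wsum d p
        (((Equiv.sumCongr α τ⁻¹).trans ρ).trans (Equiv.sumCongr σ β⁻¹))) := by
  rw [sandwich_apply]
  ext ⟨x, y⟩ ⟨u, v⟩
  rw [Matrix.of_apply, ptrans_Wsum_apply, ptrans_Wsum_apply]
  refine if_congr ?_ rfl rfl
  constructor
  · intro h t
    have := h ((Equiv.sumCongr α τ⁻¹) t)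
    rcases t with j | j <;>
      simpa [elim_comp_map, Equiv.apply_symm_apply, Equiv.symm_apply_apply] using this
  · intro h s
    have := h ((Equiv.sumCongr α⁻¹ τ) s)
    rcases s with j | j <;>
      simpa [elim_comp_map, Equiv.apply_symm_apply, Equiv.symm_apply_apply] using this

lemma glue_apply (x y : Conf d p) (i : Fin (p + p)) :
    glue d p (x, y) i = Sum.elim x y (finSumFinEquiv.symm i) := rfl

lemma Wfull_eq_Wsum (π : Equiv.Perm (Fin (p + p))) :
    Wfull d p π = Wsum d p ((finSumFinEquiv.trans π).trans finSumFinEquiv.symm) := by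
  ext ⟨x, y⟩ ⟨u, v⟩
  rw [Wfull, Wsum]
  simp only [Matrix.submatrix_apply, Matrix.of_apply, permMat]
  refine if_congr ?_ rfl rfl
  constructor
  · intro h s
    have := congrFun h (π (finSumFinEquiv s))
    simpa [glue_apply, Equiv.trans_apply, Equiv.symm_apply_apply] using this
  · intro h
    funext i
    have := h (finSumFinEquiv.symm (π⁻¹ i))
    simpa [glue_apply, Equiv.trans_apply, Equiv.apply_symm_apply,
      Equiv.apply_symm_apply] using this

lemma Wsum_eq_Wfull (ρ : Equiv.Perm (Fin p ⊕ Fin p)) :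
    Wsum d p ρ = Wfull d p ((finSumFinEquiv.symm.trans ρ).trans finSumFinEquiv) := by
  rw [Wfull_eq_Wsum]
  refine congrArg (Wsum d p) (Equiv.ext fun s => ?_)
  simp only [Equiv.trans_apply, Equiv.apply_symm_apply, Equiv.symm_apply_apply]

lemma cross_inl (k : ℕ) (j : Fin p) :
    cross p k (Sum.inl j) = if p - k ≤ (j : ℕ) then Sum.inr j else Sum.inl j := rfl

lemma cross_inr (k : ℕ) (j : Fin p) :
    cross p k (Sum.inr j) = if p - k ≤ (j : ℕ) then Sum.inl j else Sum.inr j := rfl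

lemma ptrans_Wsum_cross (k : ℕ) : ptrans d p (Wsum d p (cross p k)) = Xmat d p k := by
  ext ⟨x, y⟩ ⟨u, v⟩
  rw [ptrans_Wsum_apply, Xmat, Matrix.of_apply]
  refine if_congr ?_ rfl rfl
  constructor
  · intro h j
    have h1 := h (Sum.inl j)
    have h2 := h (Sum.inr j)
    by_cases hj : p - k ≤ (j : ℕ)
    · rw [cross_inl, if_pos hj] at h1
      rw [cross_inr, if_pos hj] at h2
      exact ⟨fun _ => ⟨h2, h1.symm⟩, fun hlt => absurd hj (by omega)⟩
    · rw [cross_inl, if_neg hj] at h1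
      rw [cross_inr, if_neg hj] at h2
      exact ⟨fun hle => absurd hle hj, fun _ => ⟨h1, h2.symm⟩⟩
  · intro h s
    rcases s with j | j
    · rw [cross_inl]
      by_cases hj : p - k ≤ (j : ℕ)
      · rw [if_pos hj]; exact ((h j).1 hj).2.symm
      · rw [if_neg hj]; exact ((h j).2 (by omega)).1
    · rw [cross_inr]
      by_cases hj : p - k ≤ (j : ℕ)
      · rw [if_pos hj]; exact ((h j).1 hj).1
      · rw [if_neg hj]; exact ((h j).2 (by omega)).2.symm

lemma filter_range_le (p m : ℕ) :
    (List.range p).filter (fun j => decide (m ≤ j)) = List.range' m (p - m) := by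
  induction p with
  | zero => simp
  | succ n ih =>
    rw [List.range_succ, List.filter_append, ih]
    by_cases h : m ≤ n
    · rw [show n + 1 - m = (n - m) + 1 by omega, List.range'_concat]
      simp [h, show m + 1 * (n - m) = n by omega]
    · rw [show n + 1 - m = 0 by omega, show n - m = 0 by omega]
      simp [h]

lemma Vop_zero : Vop d p 0 = 1 := by
  rw [Vop, filter_range_le]
  simp

lemma Vop_succ (k : ℕ) (h : k + 1 ≤ p) :
    Vop d p (k + 1) =
      arc d p ⟨p - (k+1), by omega⟩ ⟨p - (k+1), by omega⟩ * Vop d p k := by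
  rw [Vop, Vop, filter_range_le, filter_range_le,
    show p - (p - (k+1)) = (p - (p - k)) + 1 by omega, List.range'_succ,
    show p - (k+1) + 1 = p - k by omega, List.map_cons, List.prod_cons]
  congr 1
  rw [dif_pos (show p - (k+1) < p by omega)]

lemma arc_apply (hd0 : (d : ℂ) ≠ 0) (a : Fin p) (xy uv : Conf d p × Conf d p) :
    arc d p a a xy uv = if (xy.1 a = xy.2 a ∧ uv.1 a = uv.2 a ∧
      (∀ j, j ≠ a → xy.1 j = uv.1 j) ∧ (∀ j, j ≠ a → xy.2 j = uv.2 j)) then 1 else 0 := by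
  rw [arc, Matrix.smul_apply, Pplus, Matrix.of_apply, smul_ite, smul_zero, smul_eq_mul,
    mul_inv_cancel₀ hd0]

lemma Xmat_zero : Xmat d p 0 = 1 := by
  ext ⟨x, y⟩ ⟨u, v⟩
  rw [Xmat, Matrix.of_apply, Matrix.one_apply]
  simp only [Nat.sub_zero]
  refine if_congr ?_ rfl rfl
  constructor
  · intro h
    refine Prod.ext (funext fun j => ?_) (funext fun j => ?_)
    · exact ((h j).2 j.isLt).1
    · exact ((h j).2 j.isLt).2
  · intro h j
    refine ⟨fun hle => absurd j.isLt (by omega), fun _ =>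
      ⟨congrFun (congrArg Prod.fst h) j, congrFun (congrArg Prod.snd h) j⟩⟩

lemma arc_mul_Xmat (hd0 : (d : ℂ) ≠ 0) {k : ℕ} (h : k + 1 ≤ p) :
    arc d p ⟨p - (k+1), by omega⟩ ⟨p - (k+1), by omega⟩ * Xmat d p k = Xmat d p (k+1) := by
  set a : Fin p := ⟨p - (k+1), by omega⟩ with ha
  have hav : (a : ℕ) = p - (k+1) := rfl
  have halt : (a : ℕ) < p - k := by omega
  ext ⟨x, y⟩ ⟨u, v⟩
  rw [Matrix.mul_apply]
  set C : Prop := (∀ j : Fin p, (p - (k+1) ≤ (j : ℕ) → x j = y j ∧ u j = v j) ∧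
      ((j : ℕ) < p - (k+1) → x j = u j ∧ y j = v j)) with hC
  have key : ∀ wz : Conf d p × Conf d p,
      arc d p a a (x, y) wz * Xmat d p k wz (u, v) =
      if (wz = (Function.update x a (u a), Function.update y a (v a)) ∧ C) then 1 else 0 := by
    rintro ⟨w, z⟩
    rw [arc_apply hd0, Xmat, Matrix.of_apply, ite_mul_ite]
    refine if_congr ?_ rfl rfl
    simp only [Prod.mk.injEq]
    constructor
    · rintro ⟨⟨hxy, hwz, hxw, hyz⟩, hB⟩
      have hwa : w a = u a := ((hB a).2 halt).1
      have hza : z a = v a := ((hB a).2 halt).2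
      have huv : u a = v a := by rw [← hwa, ← hza]; exact hwz
      refine ⟨⟨funext fun j => ?_, funext fun j => ?_⟩, ?_⟩
      · by_cases hj : j = a
        · subst hj; rw [Function.update_self]; exact hwa
        · rw [Function.update_of_ne hj]; exact (hxw j hj).symm
      · by_cases hj : j = a
        · subst hj; rw [Function.update_self]; exact hza
        · rw [Function.update_of_ne hj]; exact (hyz j hj).symm
      · intro j
        constructor
        · intro hle
          by_cases hj : j = a
          · subst hj; exact ⟨hxy, huv⟩
          · have hjv : (j : ℕ) ≠ (a : ℕ) := fun hh => hj (Fin.ext hh)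
            have hge : p - k ≤ (j : ℕ) := by omega
            refine ⟨?_, ((hB j).1 hge).2⟩
            rw [hxw j hj, hyz j hj]; exact ((hB j).1 hge).1
        · intro hlt
          have hj : j ≠ a := fun hh => by rw [hh] at hlt; omega
          have hlt' : (j : ℕ) < p - k := by omega
          refine ⟨?_, ?_⟩
          · rw [hxw j hj]; exact ((hB j).2 hlt').1
          · rw [hyz j hj]; exact ((hB j).2 hlt').2
    · rintro ⟨⟨rfl, rfl⟩, hCc⟩
      have hxya : x a = y a := (((hCc) a).1 (by omega)).1
      have huva : u a = v a := (((hCc) a).1 (by omega)).2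
      refine ⟨⟨hxya, ?_, fun j hj => ?_, fun j hj => ?_⟩, fun j => ⟨fun hge => ?_, fun hlt => ?_⟩⟩
      · rw [Function.update_self, Function.update_self]; exact huva
      · rw [Function.update_of_ne hj]
      · rw [Function.update_of_ne hj]
      · have hj : j ≠ a := fun hh => by rw [hh] at hge; omega
        have hle : p - (k+1) ≤ (j : ℕ) := by omega
        rw [Function.update_of_ne hj, Function.update_of_ne hj]
        exact ⟨((hCc j).1 hle).1, ((hCc j).1 hle).2⟩
      · by_cases hj : j = a
        · subst hj; rw [Function.update_self, Function.update_self]; exact ⟨rfl, rfl⟩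
        · have hjv : (j : ℕ) ≠ (a : ℕ) := fun hh => hj (Fin.ext hh)
          have hlt' : (j : ℕ) < p - (k+1) := by omega
          rw [Function.update_of_ne hj, Function.update_of_ne hj]
          exact ⟨((hCc j).2 hlt').1, ((hCc j).2 hlt').2⟩
  rw [Finset.sum_congr rfl (fun wz _ => key wz)]
  by_cases hCC : C
  · rw [Finset.sum_congr rfl (fun wz _ => if_congr (and_iff_left hCC) rfl rfl),
      Finset.sum_ite_eq' Finset.univ]
    simp only [Finset.mem_univ, if_true]
    rw [Xmat, Matrix.of_apply, if_pos hCC]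
  · rw [Finset.sum_congr rfl
      (fun wz _ => if_congr (iff_false_intro (fun hh => hCC hh.2)) rfl rfl)]
    simp only [if_false, Finset.sum_const_zero]
    rw [Xmat, Matrix.of_apply, if_neg hCC]

lemma Vop_eq_Xmat (hd0 : (d : ℂ) ≠ 0) : ∀ k, k ≤ p → Vop d p k = Xmat d p k := by
  intro k
  induction k with
  | zero => intro _; rw [Vop_zero, Xmat_zero]
  | succ n ih =>
    intro h
    rw [Vop_succ n h, ih (by omega), arc_mul_Xmat hd0 h]

lemma telescope : ∀ n k, k + n = p →
    (∑ j ∈ Finset.Icc k p, Qop d p j) = ((d : ℂ) ^ k)⁻¹ • Vop d p k := by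
  intro n
  induction n with
  | zero =>
    intro k h
    have hkp : k = p := by omega
    subst hkp
    rw [Finset.Icc_self, Finset.sum_singleton, Qop, if_pos rfl]
  | succ n ih =>
    intro k h
    have hins : Finset.Icc k p = insert k (Finset.Icc (k+1) p) := by
      ext m
      simp only [Finset.mem_Icc, Finset.mem_insert]
      omega
    rw [hins, Finset.sum_insert (by simp only [Finset.mem_Icc]; omega),
      ih (k+1) (by omega), Qop, if_neg (show k ≠ p by omega)]
    abel

lemma exists_sumCongr_of_preserving {α β : Type*} (f : Equiv.Perm (α ⊕ β))
    (h1 : ∀ x, ∃ x', f (Sum.inl x) = Sum.inl x')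
    (h2 : ∀ y, ∃ y', f (Sum.inr y) = Sum.inr y') :
    ∃ (a : Equiv.Perm α) (b : Equiv.Perm β), f = Equiv.sumCongr a b := by
  choose g hg using h1
  choose h hh using h2
  have h1' : ∀ x, ∃ x', f.symm (Sum.inl x) = Sum.inl x' := by
    intro x
    rcases hs : f.symm (Sum.inl x) with x' | y'
    · exact ⟨x', rfl⟩
    · exfalso
      have hcontra : f (Sum.inr y') = Sum.inl x := by rw [← hs, Equiv.apply_symm_apply]
      rw [hh] at hcontra
      exact Sum.inr_ne_inl hcontra
  have h2' : ∀ y, ∃ y', f.symm (Sum.inr y) = Sum.inr y' := by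
    intro y
    rcases hs : f.symm (Sum.inr y) with x' | y'
    · exfalso
      have hcontra : f (Sum.inl x') = Sum.inr y := by rw [← hs, Equiv.apply_symm_apply]
      rw [hg] at hcontra
      exact Sum.inl_ne_inr hcontra
    · exact ⟨y', rfl⟩
  choose g' hg' using h1'
  choose h' hh' using h2'
  refine ⟨⟨g, g', fun x => ?_, fun x => ?_⟩, ⟨h, h', fun y => ?_, fun y => ?_⟩, ?_⟩
  · have hx := hg' (g x)
    rw [← hg x, Equiv.symm_apply_apply] at hx
    exact (Sum.inl_injective hx).symm
  · have hx := hg (g' x)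
    rw [← hg' x, Equiv.apply_symm_apply] at hx
    exact (Sum.inl_injective hx).symm
  · have hy := hh' (h y)
    rw [← hh y, Equiv.symm_apply_apply] at hy
    exact (Sum.inr_injective hy).symm
  · have hy := hh (h' y)
    rw [← hh' y, Equiv.apply_symm_apply] at hy
    exact (Sum.inr_injective hy).symm
  · ext s
    rcases s with x | y
    · rw [hg]; rfl
    · rw [hh]; rfl

lemma card_tail {k : ℕ} (hk : k ≤ p) :
    Fintype.card {j : Fin p // p - k ≤ (j : ℕ)} = k := by
  have e : {j : Fin p // p - k ≤ (j : ℕ)} ≃ Fin k :=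
    { toFun := fun j => ⟨(j.1 : ℕ) - (p - k), by
        have h1 := j.1.isLt; have h2 := j.2; omega⟩
      invFun := fun i => ⟨⟨(i : ℕ) + (p - k), by have := i.isLt; omega⟩,
        Nat.le_add_left (p - k) i⟩
      left_inv := fun j => Subtype.ext (Fin.ext (by
        have h1 := j.1.isLt; have h2 := j.2; simp; omega))
      right_inv := fun i => Fin.ext (by simp) }
  rw [Fintype.card_congr e, Fintype.card_fin]

lemma card_isLeft_inr (ρ : Equiv.Perm (Fin p ⊕ Fin p)) :
    Fintype.card {j : Fin p // (ρ (Sum.inr j)).isLeft} =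
      Fintype.card {j : Fin p // (ρ (Sum.inl j)).isRight} := by
  classical
  have e0 : {s : Fin p ⊕ Fin p // (ρ s).isLeft} ≃ {t : Fin p ⊕ Fin p // t.isLeft} :=
    ρ.subtypeEquiv (fun s => Iff.rfl)
  have e1 : {t : Fin p ⊕ Fin p // t.isLeft} ≃ Fin p :=
    { toFun := fun t => t.1.getLeft t.2
      invFun := fun j => ⟨Sum.inl j, rfl⟩
      left_inv := by
        rintro ⟨x | y, ht⟩
        · rfl
        · exact absurd ht (by simp)
      right_inv := fun j => rfl }
  have h0 : Fintype.card {s : Fin p ⊕ Fin p // (ρ s).isLeft} = p := by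
    rw [Fintype.card_congr (e0.trans e1), Fintype.card_fin]
  have hsplit : Fintype.card {s : Fin p ⊕ Fin p // (ρ s).isLeft} =
      Fintype.card {j : Fin p // (ρ (Sum.inl j)).isLeft} +
      Fintype.card {j : Fin p // (ρ (Sum.inr j)).isLeft} := by
    rw [Fintype.card_congr (Equiv.subtypeSum (p := fun s => (ρ s).isLeft)),
      Fintype.card_sum]
  have hcompl : Fintype.card {j : Fin p // (ρ (Sum.inl j)).isLeft} =
      p - Fintype.card {j : Fin p // (ρ (Sum.inl j)).isRight} := by
    have e2 : {j : Fin p // (ρ (Sum.inl j)).isLeft} ≃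
        {j : Fin p // ¬ (ρ (Sum.inl j)).isRight} :=
      Equiv.subtypeEquivRight (fun j => by cases ρ (Sum.inl j) <;> simp)
    rw [Fintype.card_congr e2, Fintype.card_subtype_compl, Fintype.card_fin]
  have hle : Fintype.card {j : Fin p // (ρ (Sum.inl j)).isRight} ≤ p := by
    have := Fintype.card_subtype_le (fun j : Fin p => (ρ (Sum.inl j)).isRight = true)
    simpa using this
  omega

lemma exists_perm_cond {P Q : Fin p → Prop} [DecidablePred P] [DecidablePred Q]
    (h : Fintype.card {j // P j} = Fintype.card {j // Q j}) :
    ∃ γ : Equiv.Perm (Fin p), ∀ j, Q (γ j) ↔ P j := by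
  have h' : Fintype.card {j // ¬ P j} = Fintype.card {j // ¬ Q j} := by
    rw [Fintype.card_subtype_compl, Fintype.card_subtype_compl, h]
  refine ⟨(Equiv.sumCompl P).symm.trans
    (((Fintype.equivOfCardEq h).sumCongr (Fintype.equivOfCardEq h')).trans
      (Equiv.sumCompl Q)), fun j => ?_⟩
  by_cases hj : P j
  · rw [Equiv.trans_apply, Equiv.trans_apply,
      Equiv.sumCompl_symm_apply_of_pos hj]
    simp only [Equiv.sumCongr_apply, Sum.map_inl, Equiv.sumCompl_apply_inl]
    exact iff_of_true (Fintype.equivOfCardEq h ⟨j, hj⟩).2 hj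
  · rw [Equiv.trans_apply, Equiv.trans_apply,
      Equiv.sumCompl_symm_apply_of_neg hj]
    simp only [Equiv.sumCongr_apply, Sum.map_inr, Equiv.sumCompl_apply_inr]
    exact iff_of_false (Fintype.equivOfCardEq h' ⟨j, hj⟩).2 hj

lemma cross_symm_inl (k : ℕ) (j : Fin p) :
    (cross p k).symm (Sum.inl j) = if p - k ≤ (j : ℕ) then Sum.inr j else Sum.inl j := rfl

lemma cross_symm_inr (k : ℕ) (j : Fin p) :
    (cross p k).symm (Sum.inr j) = if p - k ≤ (j : ℕ) then Sum.inl j else Sum.inr j := rfl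

lemma coset_decomp (ρ : Equiv.Perm (Fin p ⊕ Fin p)) :
    ∃ k, k ≤ p ∧ ∃ a b c e : Equiv.Perm (Fin p),
      ρ = ((Equiv.sumCongr c e).trans (cross p k)).trans (Equiv.sumCongr a b) := by
  classical
  set k := Fintype.card {j : Fin p // (ρ (Sum.inl j)).isRight} with hkdef
  have hkp : k ≤ p := by
    have := Fintype.card_subtype_le (fun j : Fin p => (ρ (Sum.inl j)).isRight = true)
    simpa [hkdef] using this
  obtain ⟨γc, hγc⟩ := exists_perm_cond (P := fun j => p - k ≤ (j : ℕ))
    (Q := fun j => (ρ (Sum.inl j)).isRight) ((card_tail hkp).trans hkdef)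
  obtain ⟨γe, hγe⟩ := exists_perm_cond (P := fun j => p - k ≤ (j : ℕ))
    (Q := fun j => (ρ (Sum.inr j)).isLeft)
    ((card_tail hkp).trans (hkdef.trans (card_isLeft_inr ρ).symm))
  set ρ' := (Equiv.sumCongr γc γe).trans ρ with hρ'
  have h1 : ∀ j, ((ρ' (Sum.inl j)).isRight : Prop) ↔ p - k ≤ (j : ℕ) := fun j => hγc j
  have h2 : ∀ j, ((ρ' (Sum.inr j)).isLeft : Prop) ↔ p - k ≤ (j : ℕ) := fun j => hγe j
  have hfl : ∀ x, ∃ x', ((cross p k).symm.trans ρ') (Sum.inl x) = Sum.inl x' := by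
    intro x
    rw [Equiv.trans_apply, cross_symm_inl]
    by_cases hx : p - k ≤ (x : ℕ)
    · rw [if_pos hx]
      exact Sum.isLeft_iff.mp ((h2 x).mpr hx)
    · rw [if_neg hx]
      have hnr : ¬ (ρ' (Sum.inl x)).isRight = true := fun hh => hx ((h1 x).mp hh)
      exact Sum.isLeft_iff.mp (Sum.not_isRight.mp hnr)
  have hfr : ∀ y, ∃ y', ((cross p k).symm.trans ρ') (Sum.inr y) = Sum.inr y' := by
    intro y
    rw [Equiv.trans_apply, cross_symm_inr]
    by_cases hy : p - k ≤ (y : ℕ)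
    · rw [if_pos hy]
      exact Sum.isRight_iff.mp ((h1 y).mpr hy)
    · rw [if_neg hy]
      have hnl : ¬ (ρ' (Sum.inr y)).isLeft = true := fun hh => hy ((h2 y).mp hh)
      exact Sum.isRight_iff.mp (Sum.not_isLeft.mp hnl)
  obtain ⟨a, b, hab⟩ := exists_sumCongr_of_preserving ((cross p k).symm.trans ρ') hfl hfr
  refine ⟨k, hkp, a, b, γc.symm, γe.symm, ?_⟩
  ext s
  rw [Equiv.trans_apply, Equiv.trans_apply, ← hab, Equiv.trans_apply,
    Equiv.symm_apply_apply, hρ', Equiv.trans_apply]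
  congr 1
  rcases s with j | j <;> simp

lemma sandwich_Vop (hd0 : (d : ℂ) ≠ 0) {k : ℕ} (hk : k ≤ p) (σ τ α β : Equiv.Perm (Fin p)) :
    VL d p σ * VR d p τ * Vop d p k * (VL d p α * VR d p β) =
      ptrans d p (Wsum d p (((Equiv.sumCongr α τ⁻¹).trans (cross p k)).trans
        (Equiv.sumCongr σ β⁻¹))) := by
  rw [Vop_eq_Xmat hd0 k hk, ← ptrans_Wsum_cross, conj_lemma]

end AuxWBA

/-- `A^d_{p,p}` is spanned by the sandwiched projectors
`(V_σ V'_τ) Q^(k) (V_π V'_ρ)`, `0 ≤ k ≤ p`, `σ,τ,π,ρ ∈ S_p`. -/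
theorem Apt_spanned_by_Q (d p : ℕ) (hd : 2 ≤ d) (hp : 1 ≤ p) :
    Apt d p = Submodule.span ℂ
      {M : Op d p | ∃ k, k ≤ p ∧ ∃ σ τ π ρ : Equiv.Perm (Fin p),
        M = VL d p σ * VR d p τ * Qop d p k * (VL d p π * VR d p ρ)} := by
  have hd0 : (d : ℂ) ≠ 0 := Nat.cast_ne_zero.mpr (by omega)
  apply le_antisymm
  · rw [Apt]
    apply Submodule.span_le.mpr
    rintro M ⟨π, rfl⟩
    obtain ⟨k, hk, a, b, c, e, hrho⟩ :=
      coset_decomp ((finSumFinEquiv.trans π).trans finSumFinEquiv.symm)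
    have hM : ptrans d p (Wfull d p π) =
        VL d p a * VR d p e⁻¹ * Vop d p k * (VL d p c * VR d p b⁻¹) := by
      rw [sandwich_Vop hd0 hk, inv_inv, inv_inv, Wfull_eq_Wsum, hrho]
    rw [SetLike.mem_coe, hM]
    have hV : Vop d p k = ∑ j ∈ Finset.Icc k p, (d : ℂ) ^ k • Qop d p j := by
      rw [← Finset.smul_sum, telescope (p - k) k (by omega), smul_smul,
        mul_inv_cancel₀ (pow_ne_zero k hd0), one_smul]
    rw [hV, Finset.mul_sum, Finset.sum_mul]
    apply Submodule.sum_mem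
    intro j hj
    have hsm : VL d p a * VR d p e⁻¹ * ((d : ℂ) ^ k • Qop d p j) * (VL d p c * VR d p b⁻¹) =
        (d : ℂ) ^ k • (VL d p a * VR d p e⁻¹ * Qop d p j * (VL d p c * VR d p b⁻¹)) := by
      rw [mul_smul_comm, smul_mul_assoc]
    rw [hsm]
    exact Submodule.smul_mem _ _ (Submodule.subset_span
      ⟨j, (Finset.mem_Icc.mp hj).2, a, e⁻¹, c, b⁻¹, rfl⟩)
  · apply Submodule.span_le.mpr
    rintro M ⟨k, hk, σ, τ, α, β, rfl⟩
    rw [SetLike.mem_coe]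
    have hgen : ∀ m, m ≤ p →
        VL d p σ * VR d p τ * Vop d p m * (VL d p α * VR d p β) ∈ Apt d p := by
      intro m hm
      rw [sandwich_Vop hd0 hm, Wsum_eq_Wfull]
      exact Submodule.subset_span ⟨_, rfl⟩
    by_cases hkp : k = p
    · rw [Qop, if_pos hkp]
      have hsm : VL d p σ * VR d p τ * (((d : ℂ) ^ p)⁻¹ • Vop d p p) * (VL d p α * VR d p β) =
          ((d : ℂ) ^ p)⁻¹ • (VL d p σ * VR d p τ * Vop d p p * (VL d p α * VR d p β)) := by
        rw [mul_smul_comm, smul_mul_assoc]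
      rw [hsm]
      exact Submodule.smul_mem _ _ (hgen p le_rfl)
    · rw [Qop, if_neg hkp]
      have expand : VL d p σ * VR d p τ *
          (((d : ℂ) ^ k)⁻¹ • Vop d p k - ((d : ℂ) ^ (k + 1))⁻¹ • Vop d p (k + 1)) *
            (VL d p α * VR d p β) =
          ((d : ℂ) ^ k)⁻¹ • (VL d p σ * VR d p τ * Vop d p k * (VL d p α * VR d p β)) -
          ((d : ℂ) ^ (k + 1))⁻¹ •
            (VL d p σ * VR d p τ * Vop d p (k + 1) * (VL d p α * VR d p β)) := by
        rw [mul_sub, sub_mul, mul_smul_comm, mul_smul_comm, smul_mul_assoc, smul_mul_assoc]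
      rw [expand]
      exact Submodule.sub_mem _
        (Submodule.smul_mem _ _ (hgen k hk))
        (Submodule.smul_mem _ _ (hgen (k + 1) (by omega)))


end WBA
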